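/- Under the hypotheses of the cubic remainder bound (∇g(ρ_R)=0, H = ∇²g(ρ_R) ≻ 0, Hessian L-Lipschitz on segments from ρ_R to 0 and to λ*ρ_D), with c := cos_H²(ρ_D, ρ_R) ∈ [0,1] and λ* the quadratic-optimal donor scale, the error ε := (g(0) − g(λ*ρ_D)) − c·(g(0) − g(ρ_R)) satisfies |ε| ≤ (L/6)(‖ρ_R‖³ + ‖λ*ρ_D − ρ_R‖³). -/

import Mathlib

open intervalIntegral Set

lemma taylor2_cubic {E : Type*} [NormedAddCommGroup E] [NormedSpace ℝ E]
    (g : E → ℝ) (s : Set E) (hs : IsOpen s) (hconv : Convex ℝ s)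
    (hg : ContDiffOn ℝ 2 g s) (a x : E) (ha : a ∈ s) (hx : x ∈ s)
    (L : ℝ)
    (hLip : ∀ p ∈ s, ∀ q ∈ s,
      ‖fderiv ℝ (fderiv ℝ g) p - fderiv ℝ (fderiv ℝ g) q‖ ≤ L * ‖p - q‖) :
    |g x - g a - fderiv ℝ g a (x - a)
        - (1/2) * fderiv ℝ (fderiv ℝ g) a (x - a) (x - a)|
      ≤ L / 6 * ‖x - a‖ ^ 3 := by
  set v := x - a with hv
  set f' := fderiv ℝ g with hf'
  set f'' := fderiv ℝ (fderiv ℝ g) with hf''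
  have hγmem : ∀ t ∈ Icc (0:ℝ) 1, a + t • v ∈ s := by
    intro t ht
    have h := hconv ha hx (by linarith [ht.2] : (0:ℝ) ≤ 1 - t) ht.1 (by ring)
    have heq : a + t • v = (1 - t) • a + t • x := by
      simp only [hv]; module
    rwa [heq]
  have hderiv_g : ∀ y ∈ s, HasFDerivAt g (f' y) y := fun y hy =>
    ((hg.differentiableOn (by norm_num)).differentiableAt (hs.mem_nhds hy)).hasFDerivAt
  have hderiv_f' : ∀ y ∈ s, HasFDerivAt f' (f'' y) y := by
    intro y hy
    have h2 : ContDiffAt ℝ 2 g y := hg.contDiffAt (hs.mem_nhds hy)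
    have h1 : ContDiffAt ℝ 1 (fderiv ℝ g) y := h2.fderiv_right (by norm_num)
    exact (h1.differentiableAt one_ne_zero).hasFDerivAt
  set φ : ℝ → ℝ := fun t => g (a + t • v) with hφdef
  set ψ : ℝ → ℝ := fun t => f' (a + t • v) v with hψdef
  set B : ℝ → ℝ := fun t => f'' (a + t • v) v v with hBdef
  have hγd : ∀ t : ℝ, HasDerivAt (fun t : ℝ => a + t • v) v t := by
    intro t
    have := ((hasDerivAt_id t).smul_const v).const_add a
    simpa using this
  have hφd : ∀ t ∈ Icc (0:ℝ) 1, HasDerivAt φ (ψ t) t := fun t ht =>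
    (hderiv_g _ (hγmem t ht)).comp_hasDerivAt t (hγd t)
  have hψd : ∀ t ∈ Icc (0:ℝ) 1, HasDerivAt ψ (B t) t := by
    intro t ht
    have h1 : HasDerivAt (fun t : ℝ => f' (a + t • v)) (f'' (a + t • v) v) t :=
      (hderiv_f' _ (hγmem t ht)).comp_hasDerivAt t (hγd t)
    exact (ContinuousLinearMap.apply ℝ ℝ v).hasFDerivAt.comp_hasDerivAt t h1
  have hBlip : ∀ t ∈ Icc (0:ℝ) 1, ∀ u ∈ Icc (0:ℝ) 1,
      |B t - B u| ≤ (L * ‖v‖^3) * |t - u| := by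
    intro t ht u hu
    have h1 : B t - B u = ((f'' (a + t • v) - f'' (a + u • v)) v) v := by
      simp [hBdef]
    rw [h1]
    have h2 := ((f'' (a + t • v) - f'' (a + u • v)) v).le_opNorm v
    have h3 := (f'' (a + t • v) - f'' (a + u • v)).le_opNorm v
    have h4 := hLip _ (hγmem t ht) _ (hγmem u hu)
    have h5 : (a + t • v) - (a + u • v) = (t - u) • v := by module
    rw [h5, norm_smul, Real.norm_eq_abs] at h4
    have hnv : (0:ℝ) ≤ ‖v‖ := norm_nonneg v
    calc |((f'' (a + t • v) - f'' (a + u • v)) v) v|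
        ≤ ‖(f'' (a + t • v) - f'' (a + u • v)) v‖ * ‖v‖ := by
          rw [← Real.norm_eq_abs]; exact h2
      _ ≤ (‖f'' (a + t • v) - f'' (a + u • v)‖ * ‖v‖) * ‖v‖ := by gcongr
      _ ≤ ((L * (|t - u| * ‖v‖)) * ‖v‖) * ‖v‖ := by gcongr
      _ = (L * ‖v‖^3) * |t - u| := by ring
  have hBcont : ContinuousOn B (Icc (0:ℝ) 1) := by
    have hlw : LipschitzOnWith (Real.toNNReal (L * ‖v‖^3)) B (Icc 0 1) := by
      rw [lipschitzOnWith_iff_dist_le_mul]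
      intro p hp q hq
      rw [Real.dist_eq, Real.dist_eq]
      calc |B p - B q| ≤ (L * ‖v‖^3) * |p - q| := hBlip p hp q hq
        _ ≤ Real.toNNReal (L * ‖v‖^3) * |p - q| := by
            gcongr
            exact Real.le_coe_toNNReal _
    exact hlw.continuousOn
  have hψcont : ContinuousOn ψ (Icc (0:ℝ) 1) := fun t ht =>
    (hψd t ht).continuousAt.continuousWithinAt
  have hL : 0 ≤ L * ‖v‖ ^ 3 := by
    rcases eq_or_ne v 0 with h | h
    · simp [h]
    · have h1 := hLip a ha x hx
      have h2 : ‖a - x‖ = ‖v‖ := by rw [hv, ← norm_neg]; congr 1; abel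
      have h3 : (0:ℝ) < ‖v‖ := norm_pos_iff.mpr h
      rw [h2] at h1
      have h0 : 0 ≤ L * ‖v‖ := le_trans (ContinuousLinearMap.opNorm_nonneg _) h1
      have hL0 : 0 ≤ L := by
        by_contra h'
        push_neg at h'
        nlinarith [mul_pos (neg_pos.mpr h') h3]
      positivity
  -- Step A : bound on ψ t - ψ 0 - t * B 0
  have stepA : ∀ t ∈ Icc (0:ℝ) 1, |ψ t - ψ 0 - t * B 0| ≤ L * ‖v‖^3 * t^2 / 2 := by
    intro t ht
    have hsub : uIcc (0:ℝ) t ⊆ Icc 0 1 := by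
      rw [uIcc_of_le ht.1]
      exact Icc_subset_Icc le_rfl ht.2
    have hder : ∀ u ∈ uIcc (0:ℝ) t,
        HasDerivAt (fun u => ψ u - u * B 0) (B u - B 0) u := by
      intro u hu
      have := (hψd u (hsub hu)).sub ((hasDerivAt_id u).mul_const (B 0))
      exact this.congr_deriv (by ring)
    have hintg : IntervalIntegrable (fun u => B u - B 0) MeasureTheory.volume 0 t :=
      ((hBcont.mono hsub).sub continuousOn_const).intervalIntegrable
    have hint := integral_eq_sub_of_hasDerivAt hder hintg
    have heq : ψ t - ψ 0 - t * B 0 = ∫ u in (0:ℝ)..t, (B u - B 0) := by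
      rw [hint]; ring
    rw [heq]
    have hbd : ‖∫ u in (0:ℝ)..t, (B u - B 0)‖ ≤ |∫ u in (0:ℝ)..t, (L * ‖v‖^3) * u| := by
      apply intervalIntegral.norm_integral_le_abs_of_norm_le
      · filter_upwards [MeasureTheory.ae_restrict_mem measurableSet_uIoc] with u hu
        have hu' : u ∈ Icc (0:ℝ) 1 := by
          have : u ∈ uIcc (0:ℝ) t := uIoc_subset_uIcc hu
          exact hsub this
        have := hBlip u hu' 0 (by constructor <;> norm_num)
        simp only [sub_zero] at this
        rw [Real.norm_eq_abs]
        calc |B u - B 0| ≤ L * ‖v‖^3 * |u| := this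
          _ = L * ‖v‖^3 * u := by rw [abs_of_nonneg hu'.1]
      · exact (Continuous.continuousOn (continuous_const.mul continuous_id)).intervalIntegrable
    rw [Real.norm_eq_abs] at hbd
    have hval : ∫ u in (0:ℝ)..t, (L * ‖v‖^3) * u = L * ‖v‖^3 * (t^2/2) := by
      rw [intervalIntegral.integral_const_mul, integral_id]
      ring
    rw [hval] at hbd
    refine le_trans hbd ?_
    rw [abs_of_nonneg (mul_nonneg hL (by positivity))]
    exact le_of_eq (by ring)
  -- Step B
  have hderB : ∀ t ∈ uIcc (0:ℝ) 1,
      HasDerivAt (fun t => φ t - t * ψ 0 - t^2/2 * B 0)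
        (ψ t - ψ 0 - t * B 0) t := by
    intro t ht
    rw [uIcc_of_le (by norm_num)] at ht
    have h1 := ((hφd t ht).sub ((hasDerivAt_id t).mul_const (ψ 0))).sub
      (((hasDerivAt_pow 2 t).div_const 2).mul_const (B 0))
    refine h1.congr_deriv ?_
    push_cast
    ring
  have hintgB : IntervalIntegrable (fun t => ψ t - ψ 0 - t * B 0)
      MeasureTheory.volume 0 1 := by
    apply ContinuousOn.intervalIntegrable
    rw [uIcc_of_le (by norm_num)]
    exact (hψcont.sub continuousOn_const).sub
      (Continuous.continuousOn (continuous_id.mul continuous_const))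
  have hintB := integral_eq_sub_of_hasDerivAt hderB hintgB
  have heqB : φ 1 - φ 0 - ψ 0 - (1/2) * B 0 =
      ∫ t in (0:ℝ)..1, (ψ t - ψ 0 - t * B 0) := by
    rw [hintB]; ring
  have hbdB : ‖∫ t in (0:ℝ)..1, (ψ t - ψ 0 - t * B 0)‖
      ≤ |∫ t in (0:ℝ)..1, L * ‖v‖^3 * t^2 / 2| := by
    apply intervalIntegral.norm_integral_le_abs_of_norm_le
    · filter_upwards [MeasureTheory.ae_restrict_mem measurableSet_uIoc] with u hu
      have hu' : u ∈ Icc (0:ℝ) 1 := by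
        have h : u ∈ uIcc (0:ℝ) 1 := uIoc_subset_uIcc hu
        rwa [uIcc_of_le (by norm_num)] at h
      rw [Real.norm_eq_abs]
      exact stepA u hu'
    · refine (Continuous.continuousOn ?_).intervalIntegrable
      exact (continuous_const.mul (continuous_pow 2)).div_const 2
  have hvalB : ∫ t in (0:ℝ)..1, L * ‖v‖^3 * t^2 / 2 = L * ‖v‖^3 / 6 := by
    have : ∀ t : ℝ, L * ‖v‖^3 * t^2 / 2 = (L * ‖v‖^3 / 2) * t^2 := fun t => by ring
    simp_rw [this]
    rw [intervalIntegral.integral_const_mul, integral_pow]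
    norm_num
    ring
  -- Assemble
  have hφ1 : φ 1 = g x := by simp [hφdef, hv]
  have hφ0 : φ 0 = g a := by simp [hφdef]
  have hψ0 : ψ 0 = f' a v := by simp [hψdef]
  have hB0 : B 0 = f'' a v v := by simp [hBdef]
  rw [Real.norm_eq_abs] at hbdB
  rw [hvalB, abs_of_nonneg (by linarith [hL] : (0:ℝ) ≤ L * ‖v‖^3 / 6)] at hbdB
  rw [← heqB, hφ1, hφ0, hψ0, hB0] at hbdB
  calc |g x - g a - f' a v - (1/2) * f'' a v v| ≤ L * ‖v‖^3 / 6 := hbdB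
    _ = L / 6 * ‖v‖ ^ 3 := by ring


set_option maxHeartbeats 1000000 in
theorem stmt_16 {n : ℕ} (g : EuclideanSpace ℝ (Fin n) → ℝ)
    (s : Set (EuclideanSpace ℝ (Fin n))) (hs : IsOpen s) (hconv : Convex ℝ s)
    (ρD ρR : EuclideanSpace ℝ (Fin n)) (hD : ρD ≠ 0) (hR : ρR ≠ 0)
    (hρR : ρR ∈ s) (h0 : (0 : EuclideanSpace ℝ (Fin n)) ∈ s)
    (hg : ContDiffOn ℝ 2 g s)
    (hgrad : fderiv ℝ g ρR = 0)
    (H : EuclideanSpace ℝ (Fin n) →L[ℝ] EuclideanSpace ℝ (Fin n) →L[ℝ] ℝ)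
    (hH : H = fderiv ℝ (fderiv ℝ g) ρR)
    (hpos : ∀ v : EuclideanSpace ℝ (Fin n), v ≠ 0 → 0 < H v v)
    (lstar : ℝ) (hls : lstar = H ρD ρR / H ρD ρD)
    (hmem : lstar • ρD ∈ s)
    (c : ℝ) (hc : c = (H ρD ρR) ^ 2 / (H ρD ρD * H ρR ρR))
    (L : ℝ)
    (hLip : ∀ x ∈ s, ∀ y ∈ s,
      ‖fderiv ℝ (fderiv ℝ g) x - fderiv ℝ (fderiv ℝ g) y‖ ≤ L * ‖x - y‖) :
    |(g 0 - g (lstar • ρD)) - c * (g 0 - g ρR)|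
      ≤ L / 6 * (‖ρR‖ ^ 3 + ‖lstar • ρD - ρR‖ ^ 3) := by
  have hDD : 0 < H ρD ρD := hpos ρD hD
  have hRR : 0 < H ρR ρR := hpos ρR hR
  set w := lstar • ρD with hw
  set v := w - ρR with hvdef
  have hT0 := taylor2_cubic g s hs hconv hg ρR 0 hρR h0 L hLip
  have hT1 := taylor2_cubic g s hs hconv hg ρR w hρR hmem L hLip
  rw [hgrad, ← hH] at hT0 hT1
  simp only [ContinuousLinearMap.zero_apply, sub_zero, zero_sub, norm_neg, map_neg,
    ContinuousLinearMap.neg_apply, neg_neg, neg_zero] at hT0 hT1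
  -- symmetry of H
  have hdiff2 : DifferentiableAt ℝ (fderiv ℝ g) ρR := by
    have h2 : ContDiffAt ℝ 2 g ρR := hg.contDiffAt (hs.mem_nhds hρR)
    exact (h2.fderiv_right (m := 1) (by norm_num)).differentiableAt one_ne_zero
  have hsymm : H ρD ρR = H ρR ρD := by
    have hev : ∀ᶠ y in nhds ρR, HasFDerivAt g (fderiv ℝ g y) y := by
      filter_upwards [hs.mem_nhds hρR] with y hy
      exact ((hg.differentiableOn (by norm_num)).differentiableAt
        (hs.mem_nhds hy)).hasFDerivAt
    have hf : HasFDerivAt (fderiv ℝ g) H ρR := by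
      rw [hH]; exact hdiff2.hasFDerivAt
    exact second_derivative_symmetric_of_eventually hev hf ρD ρR
  -- expansion of H v v
  have hvv : H v v = H ρR ρR - (H ρD ρR) ^ 2 / H ρD ρD := by
    have hexp : H v v = lstar * lstar * H ρD ρD - lstar * H ρD ρR
        - lstar * H ρR ρD + H ρR ρR := by
      simp only [hvdef, hw, map_sub, map_smul, ContinuousLinearMap.sub_apply,
        ContinuousLinearMap.smul_apply, smul_eq_mul]
      ring
    rw [hexp, ← hsymm, hls]
    field_simp
    ring
  have hvv0 : 0 ≤ H v v := by
    rcases eq_or_ne v 0 with h | h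
    · simp [h]
    · exact (hpos v h).le
  have hCS : (H ρD ρR) ^ 2 ≤ H ρD ρD * H ρR ρR := by
    rw [hvv] at hvv0
    have h1 : (H ρD ρR) ^ 2 / H ρD ρD ≤ H ρR ρR := by linarith
    calc (H ρD ρR) ^ 2 = ((H ρD ρR) ^ 2 / H ρD ρD) * H ρD ρD := by field_simp
      _ ≤ H ρR ρR * H ρD ρD := mul_le_mul_of_nonneg_right h1 hDD.le
      _ = H ρD ρD * H ρR ρR := mul_comm _ _
  have hc0 : 0 ≤ c := by rw [hc]; positivity
  have hc1 : c ≤ 1 := by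
    rw [hc, div_le_one (by positivity)]
    exact hCS
  have hcRR : c * H ρR ρR = (H ρD ρR) ^ 2 / H ρD ρD := by
    rw [hc]; field_simp
  set r0 := g 0 - g ρR - 1/2 * H ρR ρR with hr0
  set r1 := g w - g ρR - 1/2 * H v v with hr1
  have hkey : (g 0 - g w) - c * (g 0 - g ρR) = (1 - c) * r0 - r1 := by
    rw [hr0, hr1, hvv]
    linear_combination (-1/2 : ℝ) * hcRR
  rw [hkey]
  have h1 : |(1 - c) * r0 - r1| ≤ |(1 - c) * r0| + |r1| := abs_sub _ _
  rw [abs_mul, abs_of_nonneg (by linarith : (0:ℝ) ≤ 1 - c)] at h1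
  have h2 : (1 - c) * |r0| ≤ |r0| := by nlinarith [abs_nonneg r0]
  calc |(1 - c) * r0 - r1| ≤ |r0| + |r1| := by linarith
    _ ≤ L / 6 * ‖ρR‖ ^ 3 + L / 6 * ‖v‖ ^ 3 := add_le_add hT0 hT1
    _ = L / 6 * (‖ρR‖ ^ 3 + ‖v‖ ^ 3) := by ring
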